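/- Let R be a 1-dimensional Cohen-Macaulay local ring with finite integral closure, and let I be a regular ideal with Hom(I, I) = R. If I is reflexive (I = I**), then I is principal. -/

import Mathlib

set_option synthInstance.maxHeartbeats 400000

open IsLocalRing

/-- `Hom(I, I) = R`, expressed denominator-freely in the total ring of fractions:
whenever `(x/y)·I ⊆ I` for a regular denominator `y`, the fraction `x/y` lies in `R`. -/
def IsClosedIdeal (R : Type*) [CommRing R] (I : Ideal R) : Prop :=
  ∀ x : R, ∀ y ∈ nonZeroDivisors R, Ideal.span {x} * I ≤ Ideal.span {y} * I → x ∈ Ideal.span {y}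

/-- A regular element does not belong to any minimal prime. -/
private lemma not_mem_minimal_prime
    {R : Type*} [CommRing R] {x : R} (hx : x ∈ nonZeroDivisors R)
    {q : Ideal R} (hq : q ∈ minimalPrimes R) : x ∉ q := by
  haveI hqprime : q.IsPrime := hq.1.1
  intro hxq
  have hnil : IsNilpotent (algebraMap R (Localization q.primeCompl) x) := by
    exact absurd hx (notMem_nonZeroDivisors_of_mem_mem_minimalPrimes hxq hq)
  obtain ⟨n, hn⟩ := hnil
  rw [← map_pow] at hn
  obtain ⟨⟨s, hs⟩, hsx⟩ := (IsLocalization.map_eq_zero_iff q.primeCompl _ _).mp hn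
  have hs0 : s = 0 := (pow_mem hx n).2 s hsx
  exact hs (hs0 ▸ q.zero_mem)

/-- In a one-dimensional local ring, any prime containing a regular element is the
maximal ideal. -/
private lemma prime_eq_maximal_of_dim_one
    {R : Type*} [CommRing R] [IsLocalRing R]
    (hdim : ringKrullDim R = 1)
    {x : R} (hx : x ∈ nonZeroDivisors R)
    {p : Ideal R} (hp : p.IsPrime) (hxp : x ∈ p) : p = maximalIdeal R := by
  by_contra hne
  obtain ⟨q, hq, hqp⟩ := Ideal.exists_minimalPrimes_le (bot_le : (⊥ : Ideal R) ≤ p)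
  have hqmin : q ∈ minimalPrimes R := hq
  haveI hqprime : q.IsPrime := hqmin.1.1
  have hxq : x ∉ q := not_mem_minimal_prime hx hqmin
  have h1 : q < p := lt_of_le_of_ne hqp (fun h => hxq (h ▸ hxp))
  have h2 : p < maximalIdeal R := lt_of_le_of_ne (le_maximalIdeal hp.ne_top) hne
  haveI : (maximalIdeal R).IsPrime := (maximalIdeal.isMaximal R).isPrime
  let c : LTSeries (PrimeSpectrum R) :=
    ((RelSeries.singleton _ (⟨q, hqprime⟩ : PrimeSpectrum R)).snoc ⟨p, hp⟩
      (by exact (PrimeSpectrum.asIdeal_lt_asIdeal _ _).mp h1)).snoc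
      ⟨maximalIdeal R, inferInstance⟩ (by
        rw [RelSeries.last_snoc]
        exact (PrimeSpectrum.asIdeal_lt_asIdeal _ _).mp h2)
  have hle := Order.LTSeries.length_le_krullDim c
  rw [show Order.krullDim (PrimeSpectrum R) = ringKrullDim R from rfl, hdim] at hle
  exact (by decide : ¬ (((2:ℕ) : WithBot (WithTop ℕ)) ≤ 1)) hle

/-- let `R` be a one-dimensional Cohen-Macaulay local ring whose integral closure
(in its total ring of fractions) is a finite `R`-module, and let `I` be a regular ideal with
`Hom(I, I) = R`.  If `I` is reflexive, i.e. `I = I** = (a) : ((a) : I)` for a regular element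
`a ∈ I`, then `I` is principal. -/
theorem principal_of_closed_reflexive
    (R : Type*) [CommRing R] [IsLocalRing R] [IsNoetherianRing R]
    (hdim : ringKrullDim R = 1)
    (hCM : ∃ x ∈ maximalIdeal R, x ∈ nonZeroDivisors R)
    (hfin : Module.Finite R (integralClosure R (FractionRing R)))
    (I : Ideal R)
    (hClosed : IsClosedIdeal R I)
    (hrefl : ∃ a ∈ I, a ∈ nonZeroDivisors R ∧
      (Ideal.span {a}).colon ((Ideal.span {a}).colon I) = I) :
    I.IsPrincipal := by
  obtain ⟨a, haI, hareg, hbidual⟩ := hrefl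
  set J : Ideal R := (Ideal.span {a}).colon I with hJ
  -- membership in J
  have hJ_mul : ∀ j ∈ J, ∀ i ∈ I, j * i ∈ Ideal.span {a} := by
    intro j hj i hi
    exact Submodule.mem_colon.mp hj i hi
  have haJ : a ∈ J := by
    rw [hJ, Submodule.mem_colon]
    intro i hi
    exact Ideal.mul_mem_right i _ (Ideal.mem_span_singleton_self a)
  by_cases hT : a ∈ I * J
  · -- Case 1: the trace ideal is all of R, so I is invertible, hence principal.
    have key : ∀ y ∈ I * J, ∃ u, y = a * u ∧ (u ∈ maximalIdeal R ∨ I.IsPrincipal) := by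
      intro y hy
      refine Submodule.mul_induction_on hy ?_ ?_
      · intro i hi j hj
        obtain ⟨u, hu⟩ := Ideal.mem_span_singleton'.mp (hJ_mul j hj i hi)
        -- hu : u * a = j * i
        refine ⟨u, by linear_combination -hu, ?_⟩
        by_cases humem : u ∈ maximalIdeal R
        · exact Or.inl humem
        · right
          have hunit : IsUnit u := by
            by_contra hnu
            exact humem (mem_maximalIdeal u |>.mpr hnu)
        -- show I = span {i}
          refine ⟨i, le_antisymm ?_ ?_⟩
          · intro x hx
            obtain ⟨c, hc⟩ := Ideal.mem_span_singleton'.mp (hJ_mul j hj x hx)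
            -- x * j = c * a
            have hux : a * (u * x) = a * (c * i) := by
              linear_combination x * hu - i * hc
            have hux' : u * x = c * i := by
              have := hareg.2 _ (show (u * x - c * i) * a = 0 by linear_combination hux)
              linear_combination this
            obtain ⟨v, hv⟩ := hunit.exists_left_inv
            refine Ideal.mem_span_singleton'.mpr ⟨v * c, ?_⟩
            calc v * c * i = v * (u * x) := by rw [hux']; ring
              _ = x := by rw [← mul_assoc, hv, one_mul]
          · exact (Ideal.span_singleton_le_iff_mem _).mpr hi
      · rintro y₁ y₂ ⟨u₁, hu₁, h₁⟩ ⟨u₂, hu₂, h₂⟩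
        refine ⟨u₁ + u₂, by rw [hu₁, hu₂]; ring, ?_⟩
        rcases h₁ with h₁ | h₁
        · rcases h₂ with h₂ | h₂
          · exact Or.inl (Ideal.add_mem _ h₁ h₂)
          · exact Or.inr h₂
        · exact Or.inr h₁
    obtain ⟨u, hu, hor⟩ := key a hT
    have hu1 : u = 1 := by
      have := hareg.2 _ (show (u - 1) * a = 0 by linear_combination -hu)
      linear_combination this
    rcases hor with h | h
    · exact absurd (hu1 ▸ h) (fun hh => (maximalIdeal.isMaximal R).ne_top
        ((Ideal.eq_top_iff_one _).mpr hh))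
    · exact h
  · -- Case 2: the trace ideal is proper; derive a contradiction with closedness.
    exfalso
    obtain ⟨x, hxm, hxreg⟩ := hCM
    -- the maximal ideal is an associated prime of R/(x)
    have hxtop : Ideal.span {x} ≠ ⊤ := by
      intro h
      exact (maximalIdeal.isMaximal R).ne_top
        (top_le_iff.mp (h ▸ ((Ideal.span_singleton_le_iff_mem _).mpr hxm)))
    haveI : Nontrivial (R ⧸ Ideal.span {x}) := Ideal.Quotient.nontrivial_iff.mpr hxtop
    obtain ⟨p, hp⟩ := associatedPrimes.nonempty R (R ⧸ Ideal.span {x})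
    obtain ⟨hpprime, z', hz'⟩ := isAssociatedPrime_iff.mp hp
    obtain ⟨z, rfl⟩ := Ideal.Quotient.mk_surjective z'
    -- p = ann(z̄), so p ⊇ (x) and z·p ⊆ (x)
    have hzp : ∀ r ∈ p, r * z ∈ Ideal.span {x} := by
      intro r hr
      rw [hz', Submodule.mem_colon_singleton, Submodule.mem_bot] at hr
      have : Ideal.Quotient.mk (Ideal.span {x}) (r * z) = 0 := hr
      exact Ideal.Quotient.eq_zero_iff_mem.mp this
    have hxp : x ∈ p := by
      rw [hz', Submodule.mem_colon_singleton, Submodule.mem_bot]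
      show Ideal.Quotient.mk (Ideal.span {x}) (x * z) = 0
      exact Ideal.Quotient.eq_zero_iff_mem.mpr
        (Ideal.mul_mem_right z _ (Ideal.mem_span_singleton_self x))
    have hznotx : z ∉ Ideal.span {x} := by
      intro hz
      have h0 : (Ideal.Quotient.mk (Ideal.span {x})) z = 0 :=
        Ideal.Quotient.eq_zero_iff_mem.mpr hz
      have h1 : (1 : R) ∈ p := by
        rw [hz', Submodule.mem_colon_singleton, Submodule.mem_bot, h0, smul_zero]
      exact hpprime.ne_top ((Ideal.eq_top_iff_one _).mpr h1)
    have hpm : p = maximalIdeal R := prime_eq_maximal_of_dim_one hdim hxreg hpprime hxp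
    -- the "trace denominator" ideal T
    set T : Ideal R := (I * J).colon (Ideal.span {a}) with hTdef
    have hTproper : T ≠ ⊤ := by
      intro h
      apply hT
      have : (1 : R) ∈ T := h ▸ Submodule.mem_top
      have := Submodule.mem_colon.mp this a (Ideal.mem_span_singleton_self a)
      rwa [smul_eq_mul, one_mul] at this
    have hTm : T ≤ maximalIdeal R := le_maximalIdeal hTproper
    -- key : ∀ i ∈ I, z * i ∈ span{x} * I
    have key : ∀ i ∈ I, z * i ∈ Ideal.span {x} * I := by
      intro i hi
      -- first : ∀ j ∈ J, z * i * j ∈ span {x * a}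
      have step1 : ∀ j ∈ J, z * (i * j) ∈ Ideal.span {x * a} := by
        intro j hj
        obtain ⟨t, ht⟩ := Ideal.mem_span_singleton'.mp (hJ_mul j hj i hi)
        -- i * j = t * a ; t ∈ T
        have htT : t ∈ T := by
          rw [hTdef, Submodule.mem_colon]
          intro r hr
          obtain ⟨c, rfl⟩ := Ideal.mem_span_singleton.mp hr
          have : t * (a * c) = (i * j) * c := by linear_combination c * ht
          rw [smul_eq_mul, this]
          exact Ideal.mul_mem_right c _ (Ideal.mul_mem_mul hi hj)
        have hzt : z * t ∈ Ideal.span {x} := by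
          have := hzp t (hpm ▸ hTm htT)
          rwa [mul_comm] at this
        obtain ⟨s, hs⟩ := Ideal.mem_span_singleton'.mp hzt
        refine Ideal.mem_span_singleton'.mpr ⟨s, ?_⟩
        linear_combination a * hs + z * ht
      -- z * i ∈ (x) using j = a
      have hza := step1 a haJ
      obtain ⟨s, hs⟩ := Ideal.mem_span_singleton'.mp hza
      -- s * (x * a) = z * (i * a), cancel a : z * i = s * x
      have hzi : z * i = s * x := by
        have := hareg.2 _ (show (z * i - s * x) * a = 0 by linear_combination -hs)
        linear_combination this
      -- show s ∈ I = (a) : J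
      have hsI : s ∈ I := by
        rw [← hbidual, Submodule.mem_colon]
        intro j hj
        obtain ⟨r, hr⟩ := Ideal.mem_span_singleton'.mp (step1 j hj)
        -- r * (x * a) = z * (i * j) = (s * x) * j  ⇒ x * (s * j - r * a) = 0
        have hx0 : (s * j - r * a) * x = 0 := by linear_combination -j * hzi - hr
        have h0 := hxreg.2 _ hx0
        refine Ideal.mem_span_singleton'.mpr ⟨r, ?_⟩
        rw [smul_eq_mul]
        linear_combination -h0
      rw [hzi, mul_comm s x]
      exact Ideal.mul_mem_mul (Ideal.mem_span_singleton_self x) hsI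
    -- apply closedness to get z ∈ (x), contradiction
    have hle : Ideal.span {z} * I ≤ Ideal.span {x} * I := by
      rw [Ideal.span_singleton_mul_le_iff]
      exact key
    exact hznotx (hClosed z x hxreg hle)
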